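/- For every positive integer k there exists a finite strongly connected k-out-regular digraph that contains no even directed cycle. -/

import Mathlib

/-- The digraph contains an even directed cycle. -/
def HasEvenCycle {V : Type*} (A : V → V → Prop) : Prop :=
  ∃ n : ℕ, 2 ≤ n ∧ Even n ∧ ∃ f : ZMod n → V,
    Function.Injective f ∧ ∀ i, A (f i) (f (i + 1))

namespace Stmt4Aux

/-- Vertices: nodes of the complete `k`-ary tree of depth `2*k`,
encoded as lists over `Fin k` of length at most `2*k`. -/
abbrev V (k : ℕ) := {l : List (Fin k) // l.length ≤ 2 * k}

noncomputable instance (k : ℕ) : Fintype (V k) := by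
  classical
  exact Fintype.ofInjective
    (fun (l : V k) => fun i : Fin (2 * k) => l.1[(i : ℕ)]?)
    (by
      intro l₁ l₂ h
      apply Subtype.ext
      apply List.ext_getElem?
      intro n
      by_cases hn : n < 2 * k
      · exact congrFun h ⟨n, hn⟩
      · rw [List.getElem?_eq_none (le_trans l₁.2 (by omega)),
          List.getElem?_eq_none (le_trans l₂.2 (by omega))])

/-- Arcs: internal nodes point to their `k` children; leaves point to their
ancestors at depths `0, 2, 4, …, 2*(k-1)`. -/
def Arc (k : ℕ) (u v : V k) : Prop :=
  (u.1.length < 2 * k ∧ ∃ a : Fin k, v.1 = u.1 ++ [a]) ∨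
  (u.1.length = 2 * k ∧ ∃ j : Fin k, v.1 = u.1.take (2 * j))

def root (k : ℕ) : V k := ⟨[], by simp⟩

lemma arc_irrefl (k : ℕ) (v : V k) : ¬ Arc k v v := by
  rintro (⟨-, a, ha⟩ | ⟨hlen, j, hj⟩)
  · have := congrArg List.length ha
    simp at this
  · have := congrArg List.length hj
    rw [List.length_take] at this
    have hj2 : (j : ℕ) < k := j.2
    omega

lemma arc_degree {k : ℕ} (hk : 0 < k) (u : V k) : {w : V k | Arc k u w}.ncard = k := by
  rcases lt_or_eq_of_le u.2 with hlt | heq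
  · have hset : {w : V k | Arc k u w} =
        Set.range (fun a : Fin k =>
          (⟨u.1 ++ [a], by rw [List.length_append]; simp; omega⟩ : V k)) := by
      ext w
      constructor
      · rintro (⟨-, a, ha⟩ | ⟨hlen, -⟩)
        · exact ⟨a, Subtype.ext ha.symm⟩
        · omega
      · rintro ⟨a, rfl⟩
        exact Or.inl ⟨hlt, a, rfl⟩
    have hinj : Function.Injective (fun a : Fin k =>
        (⟨u.1 ++ [a], by rw [List.length_append]; simp; omega⟩ : V k)) := by
      intro a b hab
      have : u.1 ++ [a] = u.1 ++ [b] := congrArg Subtype.val hab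
      have := List.append_cancel_left this
      simpa using this
    rw [hset, ← Set.image_univ, Set.ncard_image_of_injective _ hinj, Set.ncard_univ,
      Nat.card_eq_fintype_card, Fintype.card_fin]
  · have hset : {w : V k | Arc k u w} =
        Set.range (fun j : Fin k =>
          (⟨u.1.take (2 * j), by rw [List.length_take]; omega⟩ : V k)) := by
      ext w
      constructor
      · rintro (⟨hlen, -⟩ | ⟨-, j, hj⟩)
        · omega
        · exact ⟨j, Subtype.ext hj.symm⟩
      · rintro ⟨j, rfl⟩
        exact Or.inr ⟨heq, j, rfl⟩
    have hinj : Function.Injective (fun j : Fin k =>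
        (⟨u.1.take (2 * j), by rw [List.length_take]; omega⟩ : V k)) := by
      intro a b hab
      have : u.1.take (2 * a) = u.1.take (2 * b) := congrArg Subtype.val hab
      have hlen := congrArg List.length this
      rw [List.length_take, List.length_take] at hlen
      have ha2 : (a : ℕ) < k := a.2
      have hb2 : (b : ℕ) < k := b.2
      have : (a : ℕ) = b := by omega
      exact Fin.ext this
    rw [hset, ← Set.image_univ, Set.ncard_image_of_injective _ hinj, Set.ncard_univ,
      Nat.card_eq_fintype_card, Fintype.card_fin]

lemma toLeaf {k : ℕ} (hk : 0 < k) (u : V k) :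
    ∃ w : V k, w.1.length = 2 * k ∧ Relation.ReflTransGen (Arc k) u w := by
  rcases lt_or_eq_of_le u.2 with hlt | heq
  · have h1 : (u.1 ++ [(⟨0, hk⟩ : Fin k)]).length ≤ 2 * k := by
      rw [List.length_append]; simp; omega
    obtain ⟨w, hwlen, hw⟩ := toLeaf hk ⟨u.1 ++ [(⟨0, hk⟩ : Fin k)], h1⟩
    exact ⟨w, hwlen, Relation.ReflTransGen.head (Or.inl ⟨hlt, ⟨0, hk⟩, rfl⟩) hw⟩
  · exact ⟨u, heq, Relation.ReflTransGen.refl⟩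
termination_by 2 * k - u.1.length
decreasing_by
  simp only [List.length_append, List.length_singleton]
  omega

lemma rootTo {k : ℕ} (v : V k) : Relation.ReflTransGen (Arc k) (root k) v := by
  have aux : ∀ m, m ≤ v.1.length →
      Relation.ReflTransGen (Arc k) (root k)
        ⟨v.1.take m, by rw [List.length_take]; have := v.2; omega⟩ := by
    intro m
    induction m with
    | zero =>
      intro _
      have h0 : (⟨v.1.take 0, by rw [List.length_take]; have := v.2; omega⟩ : V k)
          = root k := Subtype.ext (by simp [root])
      rw [h0]
    | succ m ih =>
      intro hm
      have hmlt : m < v.1.length := by omega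
      refine Relation.ReflTransGen.tail (ih (le_of_lt hmlt)) ?_
      refine Or.inl ⟨?_, v.1[m]'hmlt, ?_⟩
      · rw [List.length_take]; have := v.2; omega
      · exact (List.take_concat_get' v.1 m hmlt).symm
  have h := aux v.1.length le_rfl
  have hv : (⟨v.1.take v.1.length, by rw [List.length_take]; have := v.2; omega⟩ : V k)
      = v := Subtype.ext (by simp)
  rwa [hv] at h

lemma arc_strong {k : ℕ} (hk : 0 < k) (u v : V k) :
    Relation.ReflTransGen (Arc k) u v := by
  obtain ⟨w, hwlen, hw⟩ := toLeaf hk u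
  refine hw.trans (Relation.ReflTransGen.head ?_ (rootTo v))
  exact Or.inr ⟨hwlen, ⟨0, hk⟩, by simp [root]⟩

/-- Along a run of child-steps, the sequence forms a prefix chain with lengths
increasing by one. -/
lemma chain_aux {k : ℕ} (x : ℕ → V k) (M : ℕ)
    (hch : ∀ i < M, ∃ a : Fin k, (x (i + 1)).1 = (x i).1 ++ [a]) :
    ∀ t ≤ M, (x t).1 <+: (x M).1 ∧ (x t).1.length = (x 0).1.length + t := by
  induction M with
  | zero =>
    intro t ht
    have : t = 0 := by omega
    subst this
    exact ⟨List.prefix_refl _, by omega⟩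
  | succ M ih =>
    have hch' : ∀ i < M, ∃ a : Fin k, (x (i + 1)).1 = (x i).1 ++ [a] :=
      fun i hi => hch i (by omega)
    obtain ⟨a, ha⟩ := hch M (by omega)
    intro t ht
    by_cases ht' : t ≤ M
    · obtain ⟨hpre, hlen⟩ := ih hch' t ht'
      refine ⟨hpre.trans ⟨[a], ha.symm⟩, hlen⟩
    · have : t = M + 1 := by omega
      subst this
      obtain ⟨-, hlenM⟩ := ih hch' M le_rfl
      refine ⟨List.prefix_refl _, ?_⟩
      rw [ha, List.length_append]
      simp
      omega

lemma no_even_cycle {k : ℕ} (hk : 0 < k) : ¬ HasEvenCycle (Arc k) := by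
  rintro ⟨n, hn2, hneven, f, hfinj, hf⟩
  haveI : NeZero n := ⟨by omega⟩
  obtain ⟨i₀, -, hmin⟩ := Finset.exists_min_image (Finset.univ : Finset (ZMod n))
    (fun i => (f i).1.length) ⟨0, Finset.mem_univ 0⟩
  -- rotate the cycle so that the minimum-depth vertex has index 0
  set g : ZMod n → V k := fun i => f (i + i₀) with hg
  have hginj : Function.Injective g := by
    intro a b hab
    have := hfinj hab
    exact add_right_cancel this
  have hgarc : ∀ i, Arc k (g i) (g (i + 1)) := by
    intro i
    have := hf (i + i₀)
    simpa [hg, add_right_comm i i₀ 1] using this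
  have hgmin : ∀ i, (g 0).1.length ≤ (g i).1.length := by
    intro i
    simpa [hg] using hmin (i + i₀) (Finset.mem_univ _)
  -- natural-number indexed cycle
  set x : ℕ → V k := fun m => g (m : ZMod n) with hxdef
  have hxarc : ∀ m : ℕ, Arc k (x m) (x (m + 1)) := by
    intro m
    have := hgarc (m : ZMod n)
    have hcast : ((m : ZMod n) + 1) = ((m + 1 : ℕ) : ZMod n) := by push_cast; ring
    rwa [hcast] at this
  have hxmin : ∀ m : ℕ, (x 0).1.length ≤ (x m).1.length := by
    intro m
    have := hgmin (m : ZMod n)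
    simpa [hxdef] using this
  -- write n = n' + 2
  obtain ⟨n', rfl⟩ : ∃ n', n = n' + 2 := ⟨n - 2, by omega⟩
  have hxwrap : x (n' + 2) = x 0 := by
    have h1 : ((n' + 2 : ℕ) : ZMod (n' + 2)) = ((0 : ℕ) : ZMod (n' + 2)) := by
      rw [ZMod.natCast_self, Nat.cast_zero]
    simp only [hxdef, h1]
  -- the last arc must be a jump
  have hlast := hxarc (n' + 1)
  rw [show n' + 1 + 1 = n' + 2 from rfl, hxwrap] at hlast
  have hlastlen : (x 0).1.length ≤ (x (n' + 1)).1.length := hxmin (n' + 1)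
  rcases hlast with ⟨-, a, ha⟩ | ⟨hleafL, j, hjump⟩
  · -- child step into the minimum: impossible
    have := congrArg List.length ha
    rw [List.length_append] at this
    simp at this
    omega
  -- injectivity on indices below n'+2
  have hxinj : ∀ s t : ℕ, s < n' + 2 → t < n' + 2 → x s = x t → s = t := by
    intro s t hs ht hst
    have : ((s : ℕ) : ZMod (n' + 2)) = ((t : ℕ) : ZMod (n' + 2)) := hginj hst
    rw [ZMod.natCast_eq_natCast_iff'] at this
    rwa [Nat.mod_eq_of_lt hs, Nat.mod_eq_of_lt ht] at this
  -- case on whether there is an earlier jump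
  by_cases hE : ∃ m, m ≤ n' ∧ ¬ ∃ a : Fin k, (x (m + 1)).1 = (x m).1 ++ [a]
  · -- a second jump: contradiction
    classical
    set m₀ := Nat.find hE with hm₀def
    obtain ⟨hm₀n, hm₀j⟩ := Nat.find_spec hE
    have hm₀min : ∀ i, i < m₀ →
        ¬ (i ≤ n' ∧ ¬ ∃ a : Fin k, (x (i + 1)).1 = (x i).1 ++ [a]) :=
      fun i hi => Nat.find_min hE hi
    have hch : ∀ i < m₀, ∃ a : Fin k, (x (i + 1)).1 = (x i).1 ++ [a] := by
      intro i hi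
      by_contra hcon
      exact (hm₀min i hi) ⟨by omega, hcon⟩
    -- the arc at m₀ is a jump
    have harc := hxarc m₀
    rcases harc with ⟨-, a, ha⟩ | ⟨hleaf, j₀, hj₀⟩
    · exact hm₀j ⟨a, ha⟩
    -- prefix chain from 0 to m₀
    have hchain := chain_aux x m₀ hch
    obtain ⟨-, hlenm₀⟩ := hchain m₀ le_rfl
    have hj₀lt : (j₀ : ℕ) < k := j₀.2
    -- length of the landing vertex
    have hlenm₀1 : (x (m₀ + 1)).1.length = 2 * (j₀ : ℕ) := by
      rw [hj₀, List.length_take]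
      omega
    have hminlen : (x 0).1.length ≤ 2 * (j₀ : ℕ) := by
      have := hxmin (m₀ + 1)
      omega
    set t := 2 * (j₀ : ℕ) - (x 0).1.length with hT
    have htm₀ : t < m₀ := by omega
    obtain ⟨hpre_t, hlen_t⟩ := hchain t (le_of_lt htm₀)
    -- x t and x (m₀+1) are both the prefix of x m₀ of length 2*j₀
    have hxt : (x t).1 = (x m₀).1.take ((x t).1.length) :=
      List.prefix_iff_eq_take.mp hpre_t
    have hteq : (x t).1 = (x (m₀ + 1)).1 := by
      rw [hxt, hj₀]
      congr 1
      omega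
    have := hxinj t (m₀ + 1) (by omega) (by omega) (Subtype.ext hteq)
    omega
  · -- no other jump: the cycle is a single descending path plus one jump,
    -- hence has odd length
    push_neg at hE
    have hch : ∀ i < n' + 1, ∃ a : Fin k, (x (i + 1)).1 = (x i).1 ++ [a] := by
      intro i hi
      exact hE i (by omega)
    have hchain := chain_aux x (n' + 1) hch
    obtain ⟨-, hlenL⟩ := hchain (n' + 1) le_rfl
    have hj2 : (j : ℕ) < k := j.2
    have hlen0 : (x 0).1.length = 2 * (j : ℕ) := by
      have := congrArg List.length hjump
      rw [List.length_take] at this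
      omega
    obtain ⟨r, hr⟩ := hneven
    omega

end Stmt4Aux

/-- For every positive integer `k` there exists a finite strongly
connected `k`-out-regular digraph containing no even directed cycle. -/
theorem stmt4 (k : ℕ) (hk : 0 < k) :
    ∃ (N : ℕ) (A : Fin N → Fin N → Prop),
      0 < N ∧
      (∀ v, ¬ A v v) ∧
      (∀ v : Fin N, {w | A v w}.ncard = k) ∧
      (∀ u v : Fin N, Relation.ReflTransGen A u v) ∧
      ¬ HasEvenCycle A := by
  classical
  let e := Fintype.equivFin (Stmt4Aux.V k)
  refine ⟨Fintype.card (Stmt4Aux.V k),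
    fun a b => Stmt4Aux.Arc k (e.symm a) (e.symm b), ?_, ?_, ?_, ?_, ?_⟩
  · haveI : Nonempty (Stmt4Aux.V k) := ⟨Stmt4Aux.root k⟩
    exact Fintype.card_pos
  · intro v
    exact Stmt4Aux.arc_irrefl k (e.symm v)
  · intro v
    have hset : {w | Stmt4Aux.Arc k (e.symm v) (e.symm w)} =
        e '' {w' | Stmt4Aux.Arc k (e.symm v) w'} := by
      ext w
      constructor
      · intro h
        exact ⟨e.symm w, h, by simp⟩
      · rintro ⟨w', hw', rfl⟩
        simpa using hw'
    rw [hset, Set.ncard_image_of_injective _ e.injective]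
    exact Stmt4Aux.arc_degree hk (e.symm v)
  · intro u v
    have h := Stmt4Aux.arc_strong hk (e.symm u) (e.symm v)
    have h2 := Relation.ReflTransGen.lift
      (p := fun a b => Stmt4Aux.Arc k (e.symm a) (e.symm b)) e
      (fun a b hab => by simpa [Function.onFun] using hab) _ _ h
    simpa [Function.onFun] using h2
  · rintro ⟨n, hn2, hneven, f, hfinj, hf⟩
    exact Stmt4Aux.no_even_cycle hk
      ⟨n, hn2, hneven, fun i => e.symm (f i),
        fun a b hab => hfinj (e.symm.injective hab), fun i => hf i⟩
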